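/- Let D be a finite set, f : D → {0,1}, H a finite-dimensional complex inner product space, K ⊆ H a subspace, w₀ ∈ H, and for each x ∈ D a subspace H(x) ⊆ H. Suppose for each x ∈ D a vector w_x ∈ H is given such that: if f(x) = 1 then w_x ∈ H(x) and w_x − w₀ ∈ K; and if f(x) = 0 then w_x ∈ H(x)^⊥, w_x ⊥ K, and ⟨w₀, w_x⟩ = 1. Define O_x := 2Π_{H(x)} − I (where Π_{H(x)} is the orthogonal projection onto H(x)), and set w_x⁺ := w_x, w_x⁻ := 0 if f(x) = 1, and w_x⁺ := 0, w_x⁻ := w_x if f(x) = 0. Then for all x, y ∈ D: O_x is unitary with O_x² = I, O_x w_x^± = ± w_x^±, and ⟨w_x⁺, w_y⁻⟩ = 1 if f(x) = 1 and f(y) = 0, and ⟨w_x⁺, w_y⁻⟩ = 0 otherwise. -/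

import Mathlib

open scoped InnerProductSpace

/-- hyperedge problem from a span program.  Let `(H, x ↦ H(x), K, w₀)` be
a span program computing `f : D → {0,1}` (here `f : D → Bool`, with `true` standing for `1`),
with positive witnesses `w_x` (for `f x = 1`) and negative witnesses `w_x` (for `f x = 0`).
With `O_x := 2Π_{H(x)} - I` the reflection through `H(x)`, and `w_x⁺ := w_x, w_x⁻ := 0` for
positive inputs, `w_x⁺ := 0, w_x⁻ := w_x` for negative ones, the family `{w_x^±}` is a
feasible solution to the corresponding hyperedge problem: `O_x` is unitary with `O_x² = I`,
`O_x w_x^± = ± w_x^±`, and `⟪w_x⁺, w_y⁻⟫ = 1` if `f x = 1 ∧ f y = 0` and `= 0` otherwise. -/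
theorem hyperedge_from_span_program
    {D : Type*} [Fintype D]
    {H : Type*} [NormedAddCommGroup H] [InnerProductSpace ℂ H] [FiniteDimensional ℂ H]
    (f : D → Bool) (K : Submodule ℂ H) (w₀ : H) (Hsp : D → Submodule ℂ H)
    (w : D → H)
    (hpos : ∀ x, f x = true → w x ∈ Hsp x ∧ w x - w₀ ∈ K)
    (hneg : ∀ x, f x = false → w x ∈ (Hsp x)ᗮ ∧ w x ∈ Kᗮ ∧ ⟪w₀, w x⟫_ℂ = 1)
    (wp wm : D → H)
    (hwp : ∀ x, wp x = if f x = true then w x else 0)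
    (hwm : ∀ x, wm x = if f x = true then 0 else w x) :
    (∀ x (u v : H), ⟪Submodule.reflection (Hsp x) u, Submodule.reflection (Hsp x) v⟫_ℂ = ⟪u, v⟫_ℂ) ∧
    (∀ x (v : H), Submodule.reflection (Hsp x) (Submodule.reflection (Hsp x) v) = v) ∧
    (∀ x, Submodule.reflection (Hsp x) (wp x) = wp x) ∧
    (∀ x, Submodule.reflection (Hsp x) (wm x) = -wm x) ∧
    (∀ x y, ⟪wp x, wm y⟫_ℂ = if f x = true ∧ f y = false then 1 else 0) := by
  refine ⟨fun x u v => (Submodule.reflection (Hsp x)).inner_map_map u v,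
    fun x v => Submodule.reflection_reflection (Hsp x) v, ?_, ?_, ?_⟩
  · intro x
    rw [hwp x]
    by_cases h : f x = true
    · simp only [h, if_true]
      exact Submodule.reflection_mem_subspace_eq_self (hpos x h).1
    · simp [h]
  · intro x
    rw [hwm x]
    by_cases h : f x = true
    · simp [h]
    · simp only [h, if_false]
      exact Submodule.reflection_mem_subspace_orthogonalComplement_eq_neg
        (hneg x (by simpa using h)).1
  · intro x y
    rw [hwp x, hwm y]
    by_cases hx : f x = true
    · by_cases hy : f y = true
      · simp [hx, hy]
      · have hy' : f y = false := by simpa using hy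
        rw [if_pos hx, if_neg hy, if_pos ⟨hx, hy'⟩]
        have h1 : w x = (w x - w₀) + w₀ := by abel
        have h2 : ⟪w x - w₀, w y⟫_ℂ = 0 := (hneg y hy').2.1 _ (hpos x hx).2
        rw [h1, inner_add_left, h2, (hneg y hy').2.2, zero_add]
    · simp [hx]
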